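/- Let ℚ(v) be the field of rational functions over ℚ in an indeterminate v, with balanced quantum integers [m] = (v^m - v^{-m})/(v - v^{-1}) and quantum binomial coefficients [m choose p] = [m]!/([p]![m-p]!) where [m]! = ∏_{t=1}^{m}[t]. For positive integers n and i with 1 ≤ i ≤ n, define B_{n,i} = Σ_{p=n-i+1}^{n} (-1)^{p+1} [2n+1 choose p] [2(n-p)+1]. Then B_{n,i} = (-1)^{n-i} [2n+1 choose n-i] · [n+i+1]·[i]/[n]. -/

import Mathlib

/-- Balanced quantum integer `[m] = (v^m - v^{-m})/(v - v⁻¹)`. -/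
noncomputable def qint {F : Type*} [Field F] (v : F) (m : ℤ) : F :=
  (v ^ m - v ^ (-m)) / (v - v⁻¹)

/-- Quantum factorial `[m]! = ∏_{t=1}^m [t]`. -/
noncomputable def qfact {F : Type*} [Field F] (v : F) : ℕ → F
  | 0 => 1
  | m + 1 => qfact v m * qint v (m + 1)

/-- Quantum binomial coefficient `[m choose t] = [m]!/([t]![m-t]!)`. -/
noncomputable def qbinom {F : Type*} [Field F] (v : F) (m t : ℕ) : F :=
  qfact v m / (qfact v t * qfact v (m - t))

/-- The field ℚ(v) of rational functions over ℚ. -/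
abbrev Kv : Type := RatFunc ℚ

/-- The indeterminate `v` of ℚ(v). -/
noncomputable def vv : Kv := RatFunc.X

lemma vv_ne_zero : (vv : Kv) ≠ 0 := RatFunc.X_ne_zero

lemma vv_pow_ne_one (m : ℕ) (hm : m ≠ 0) : (vv : Kv) ^ m ≠ 1 := by
  intro h
  have h2 : algebraMap (Polynomial ℚ) (RatFunc ℚ) (Polynomial.X ^ m) =
      algebraMap (Polynomial ℚ) (RatFunc ℚ) 1 := by
    rw [map_pow, map_one, RatFunc.algebraMap_X]
    exact h
  have h3 : (Polynomial.X : Polynomial ℚ) ^ m = 1 := RatFunc.algebraMap_injective ℚ h2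
  have h4 := congrArg (Polynomial.eval 2) h3
  simp only [Polynomial.eval_pow, Polynomial.eval_X, Polynomial.eval_one] at h4
  have : (1 : ℚ) < 2 ^ m := one_lt_pow₀ (by norm_num) hm
  rw [h4] at this
  exact lt_irrefl _ this

lemma vv_zpow_ne_one (k : ℤ) (hk : k ≠ 0) : (vv : Kv) ^ k ≠ 1 := by
  intro h
  have h2 : (vv : Kv) ^ (k.natAbs) = 1 := by
    rcases Int.natAbs_eq k with he | he
    · rw [← zpow_natCast, ← he, h]
    · rw [← zpow_natCast, ← neg_neg ((k.natAbs : ℤ)), ← he, zpow_neg, h, inv_one]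
  exact vv_pow_ne_one _ (Int.natAbs_ne_zero.mpr hk) h2

lemma vv_sub_inv_ne_zero : (vv : Kv) - vv⁻¹ ≠ 0 := by
  intro h
  have h1 : (vv : Kv) = vv⁻¹ := sub_eq_zero.mp h
  have h2 : (vv : Kv) ^ (2 : ℤ) = 1 := by
    rw [show (2 : ℤ) = 1 + 1 from rfl, zpow_add₀ vv_ne_zero, zpow_one]
    nth_rewrite 2 [h1]
    exact mul_inv_cancel₀ vv_ne_zero
  exact vv_zpow_ne_one 2 (by norm_num) h2

lemma qint_ne_zero (m : ℤ) (hm : m ≠ 0) : qint vv m ≠ 0 := by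
  unfold qint
  apply div_ne_zero _ vv_sub_inv_ne_zero
  rw [sub_ne_zero]
  intro h
  have h2 : (vv : Kv) ^ (2 * m) = 1 := by
    rw [two_mul, zpow_add₀ vv_ne_zero]
    nth_rewrite 2 [h]
    rw [← zpow_add₀ vv_ne_zero]
    simp
  exact vv_zpow_ne_one _ (by omega) h2

lemma qfact_ne_zero (m : ℕ) : qfact vv m ≠ 0 := by
  induction m with
  | zero => simp [qfact]
  | succ k ih =>
      rw [qfact]
      exact mul_ne_zero ih (qint_ne_zero _ (by omega))

lemma qint_one : qint vv 1 = 1 := by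
  unfold qint
  rw [zpow_one, show ((-1 : ℤ)) = -1 from rfl, zpow_neg, zpow_one]
  exact div_self vv_sub_inv_ne_zero

lemma qint_key (a b : ℤ) :
    qint vv (a + b + 1) * qint vv b + qint vv (a - b) * qint vv (b + 1)
      = qint vv (2 * b + 1) * qint vv a := by
  unfold qint
  have hv := vv_ne_zero
  have hs := vv_sub_inv_ne_zero
  rw [div_mul_div_comm, div_mul_div_comm, div_mul_div_comm, ← add_div,
    div_eq_div_iff (mul_ne_zero hs hs) (mul_ne_zero hs hs)]
  simp only [neg_add, neg_sub, two_mul, zpow_add₀ hv, zpow_sub₀ hv, zpow_one, zpow_neg]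
  field_simp
  ring_nf

lemma qbinom_step (m t : ℕ) (ht : t + 1 ≤ m) :
    qbinom vv m (t + 1) * qint vv ((t : ℤ) + 1)
      = qbinom vv m t * qint vv ((m : ℤ) - t) := by
  unfold qbinom
  have h1 : m - t = (m - (t + 1)) + 1 := by omega
  rw [h1, qfact, qfact]
  have h2 : ((m - (t + 1) : ℕ) : ℤ) + 1 = (m : ℤ) - t := by omega
  rw [h2]
  have hq1 : qint vv ((t : ℤ) + 1) ≠ 0 := qint_ne_zero _ (by omega)
  have hq2 : qint vv ((m : ℤ) - t) ≠ 0 := qint_ne_zero _ (by omega)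
  rw [div_mul_eq_mul_div, div_mul_eq_mul_div, div_eq_div_iff
    (mul_ne_zero (mul_ne_zero (qfact_ne_zero t) hq1) (qfact_ne_zero _))
    (mul_ne_zero (qfact_ne_zero t) (mul_ne_zero (qfact_ne_zero _) hq2))]
  ring

/-- For `1 ≤ i ≤ n`, the partial sum
`B_{n,i} = Σ_{p=n-i+1}^{n} (-1)^{p+1} [2n+1 choose p] [2(n-p)+1]` equals
`(-1)^{n-i} [2n+1 choose n-i] [n+i+1][i]/[n]` in ℚ(v). -/
theorem stmt7 (n i : ℕ) (h1 : 1 ≤ i) (h2 : i ≤ n) :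
    ∑ p ∈ Finset.Icc (n - i + 1) n,
        (-1 : Kv) ^ (p + 1) * qbinom vv (2 * n + 1) p * qint vv (2 * ((n : ℤ) - p) + 1)
      = (-1 : Kv) ^ (n - i) * qbinom vv (2 * n + 1) (n - i) *
          (qint vv ((n : ℤ) + i + 1) * qint vv i / qint vv n) := by
  have hn : qint vv (n : ℤ) ≠ 0 := qint_ne_zero _ (by omega)
  revert h2
  induction i, h1 using Nat.le_induction with
  | base =>
      intro h2
      rw [show n - 1 + 1 = n by omega, Finset.Icc_self, Finset.sum_singleton]
      rw [show 2 * ((n : ℤ) - (n : ℕ)) + 1 = 1 by omega, qint_one, mul_one]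
      rw [show ((1 : ℕ) : ℤ) = 1 from rfl, qint_one, mul_one]
      have hb := qbinom_step (2 * n + 1) (n - 1) (by omega)
      rw [show n - 1 + 1 = n by omega] at hb
      rw [show ((n - 1 : ℕ) : ℤ) + 1 = (n : ℤ) by omega] at hb
      rw [show ((2 * n + 1 : ℕ) : ℤ) - ((n - 1 : ℕ) : ℤ) = (n : ℤ) + 1 + 1 by omega] at hb
      rw [← mul_div_assoc, eq_div_iff hn]
      rw [show n + 1 = (n - 1) + 1 + 1 by omega]
      linear_combination ((-1 : Kv) ^ (n - 1)) * hb
  | succ i hi ih =>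
      intro h2
      have IH := ih (by omega)
      rw [show n - (i + 1) + 1 = n - i by omega,
        ← Finset.insert_Icc_add_one_left_eq_Icc (show n - i ≤ n by omega),
        Finset.sum_insert (by simp), IH]
      rw [show n - i = n - (i + 1) + 1 by omega]
      rw [show 2 * ((n : ℤ) - ((n - (i + 1) + 1 : ℕ) : ℤ)) + 1 = 2 * (i : ℤ) + 1 by omega]
      rw [show ((i + 1 : ℕ) : ℤ) = (i : ℤ) + 1 by omega]
      rw [show (n : ℤ) + ((i : ℤ) + 1) + 1 = (n : ℤ) + (i : ℤ) + 2 by ring]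
      have hb := qbinom_step (2 * n + 1) (n - (i + 1)) (by omega)
      rw [show ((n - (i + 1) : ℕ) : ℤ) + 1 = (n : ℤ) - (i : ℤ) by omega] at hb
      rw [show ((2 * n + 1 : ℕ) : ℤ) - ((n - (i + 1) : ℕ) : ℤ) = (n : ℤ) + (i : ℤ) + 2 by omega] at hb
      have key := qint_key (n : ℤ) (i : ℤ)
      rw [← mul_div_assoc, ← mul_div_assoc]
      rw [eq_div_iff hn, add_mul, div_mul_cancel₀ _ hn]
      linear_combination (-((-1 : Kv) ^ (n - (i + 1))) * qbinom vv (2 * n + 1) (n - (i + 1) + 1)) * key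
        + ((-1 : Kv) ^ (n - (i + 1)) * qint vv ((i : ℤ) + 1)) * hb
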